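/- arXiv:1708.06397 — 4 statements merged into one kernel-verified Lean document; each statement's English description precedes it below -/
import Mathlib

section
/- If a nonnegative integrable function h on ℝ^n with ∫ h = 1 tiles ℝ^n at level 1 by translates along a countable set S (∑_{α∈S} h(w−α) = 1 a.e.), then there exists C > 0 such that every cube in ℝ^n of side length C contains at least one point of S. -/
open MeasureTheory Real Set ENNReal Topology Filter

lemma box_meas {n : ℕ} (a b : Fin n → ℝ) :
    MeasurableSet {w : EuclideanSpace ℝ (Fin n) | ∀ i, a i ≤ w i ∧ w i ≤ b i} := by
  have : {w : EuclideanSpace ℝ (Fin n) | ∀ i, a i ≤ w i ∧ w i ≤ b i}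
      = ⋂ i, {w : EuclideanSpace ℝ (Fin n) | w i ∈ Set.Icc (a i) (b i)} := by
    ext w; simp [Set.mem_iInter, Set.mem_Icc]
  rw [this]
  refine MeasurableSet.iInter fun i => ?_
  exact measurableSet_Icc.preimage ((measurable_pi_apply i).comp
    (MeasurableEquiv.toLp 2 (Fin n → ℝ)).symm.measurable)

lemma box_vol {n : ℕ} (a b : Fin n → ℝ) :
    volume {w : EuclideanSpace ℝ (Fin n) | ∀ i, a i ≤ w i ∧ w i ≤ b i}
      = ∏ i, ENNReal.ofReal (b i - a i) := by
  have hpre : {w : EuclideanSpace ℝ (Fin n) | ∀ i, a i ≤ w i ∧ w i ≤ b i}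
      = (MeasurableEquiv.toLp 2 (Fin n → ℝ)).symm ⁻¹' (Set.univ.pi fun i => Set.Icc (a i) (b i)) := by
    ext w
    constructor
    · intro hw
      exact Set.mem_univ_pi.2 fun i => Set.mem_Icc.2 (hw i)
    · intro hw i
      exact Set.mem_Icc.1 (Set.mem_univ_pi.1 hw i)
  rw [hpre, (EuclideanSpace.volume_preserving_symm_measurableEquiv_toLp (Fin n)).measure_preimage
    (MeasurableSet.univ_pi fun i => measurableSet_Icc).nullMeasurableSet]
  rw [volume_pi_pi]
  simp [Real.volume_Icc]

lemma coord_abs_le_norm {n : ℕ} (u : EuclideanSpace ℝ (Fin n)) (i : Fin n) : |u i| ≤ ‖u‖ := by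
  rw [EuclideanSpace.norm_eq, ← Real.sqrt_sq_eq_abs (u i)]
  apply Real.sqrt_le_sqrt
  simpa using Finset.single_le_sum (f := fun j => ‖u j‖ ^ 2)
    (fun j _ => sq_nonneg _) (Finset.mem_univ i)

lemma tile_key {n : ℕ} (H : EuclideanSpace ℝ (Fin n) → ℝ≥0∞)
    (hH : AEMeasurable H volume) (S : Set (EuclideanSpace ℝ (Fin n))) (hS : S.Countable)
    (htile' : ∀ᵐ w : EuclideanSpace ℝ (Fin n) ∂volume,
      ∑' α : S, H (w - (α : EuclideanSpace ℝ (Fin n))) = 1)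
    (A : Set (EuclideanSpace ℝ (Fin n))) (hA : MeasurableSet A) :
    ∑' α : S, (volume.withDensity H) ((· + (α : EuclideanSpace ℝ (Fin n))) ⁻¹' A) = volume A := by
  have : Countable S := hS.to_subtype
  calc ∑' α : S, (volume.withDensity H) ((· + (α : EuclideanSpace ℝ (Fin n))) ⁻¹' A)
      = ∑' α : S, ∫⁻ u in (· + (α : EuclideanSpace ℝ (Fin n))) ⁻¹' A, H u ∂volume := by
        refine tsum_congr fun α => ?_
        exact withDensity_apply H (hA.preimage (measurable_add_const _))
    _ = ∑' α : S, ∫⁻ w in A, H (w - (α : EuclideanSpace ℝ (Fin n))) ∂volume := by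
        refine tsum_congr fun α => ?_
        have := (measurePreserving_add_right volume (α : EuclideanSpace ℝ (Fin n)))
          |>.setLIntegral_comp_preimage_emb (measurableEmbedding_addRight _)
            (fun w => H (w - (α : EuclideanSpace ℝ (Fin n)))) A
        simpa using this
    _ = ∫⁻ w in A, ∑' α : S, H (w - (α : EuclideanSpace ℝ (Fin n))) ∂volume := by
        refine (lintegral_tsum fun α => ?_).symm
        exact (hH.comp_quasiMeasurePreserving
          (measurePreserving_sub_right volume _).quasiMeasurePreserving).restrict
    _ = ∫⁻ _ in A, 1 ∂volume := lintegral_congr_ae (ae_restrict_of_ae htile')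
    _ = volume A := by simp

/-- If a nonnegative integrable `h` on `ℝ^n` with `∫ h = 1` tiles `ℝ^n` at level `1` by
translates along a countable set `S`, then there is `C > 0` such that every cube of side
length `C` contains at least one point of `S`. -/
theorem tiling_implies_well_distributed {n : ℕ} (hn : 1 ≤ n)
    (h : EuclideanSpace ℝ (Fin n) → ℝ) (hpos : ∀ x, 0 ≤ h x)
    (hint : Integrable h volume) (hmass : ∫ x, h x = 1)
    (S : Set (EuclideanSpace ℝ (Fin n))) (hS : S.Countable)
    (htile : ∀ᵐ w : EuclideanSpace ℝ (Fin n) ∂volume,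
      ∑' α : S, h (w - (α : EuclideanSpace ℝ (Fin n))) = 1) :
    ∃ C > 0, ∀ x : EuclideanSpace ℝ (Fin n),
      ∃ s ∈ S, ∀ i : Fin n, x i ≤ s i ∧ s i ≤ x i + C := by
  classical
  have : Countable S := hS.to_subtype
  set H : EuclideanSpace ℝ (Fin n) → ℝ≥0∞ := fun x => ENNReal.ofReal (h x) with hHdef
  have hH : AEMeasurable H volume :=
    ENNReal.measurable_ofReal.comp_aemeasurable hint.1.aemeasurable
  set μ := volume.withDensity H with hμdef
  have hμuniv : μ Set.univ = 1 := by
    rw [hμdef, withDensity_apply _ MeasurableSet.univ, Measure.restrict_univ, hHdef]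
    rw [← ofReal_integral_eq_lintegral_ofReal hint (Filter.Eventually.of_forall hpos), hmass]
    simp
  have hfin : IsFiniteMeasure μ := ⟨by rw [hμuniv]; exact ENNReal.one_lt_top⟩
  have htile' : ∀ᵐ w : EuclideanSpace ℝ (Fin n) ∂volume,
      ∑' α : S, H (w - (α : EuclideanSpace ℝ (Fin n))) = 1 := by
    filter_upwards [htile] with w hw
    have hsum : Summable fun α : S => h (w - (α : EuclideanSpace ℝ (Fin n))) := by
      by_contra hc
      rw [tsum_eq_zero_of_not_summable hc] at hw; norm_num at hw
    calc ∑' α : S, H (w - (α : EuclideanSpace ℝ (Fin n)))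
        = ENNReal.ofReal (∑' α : S, h (w - (α : EuclideanSpace ℝ (Fin n)))) :=
          (ENNReal.ofReal_tsum_of_nonneg (fun _ => hpos _) hsum).symm
      _ = 1 := by rw [hw]; simp
  have key : ∀ A : Set (EuclideanSpace ℝ (Fin n)), MeasurableSet A →
      ∑' α : S, μ ((· + (α : EuclideanSpace ℝ (Fin n))) ⁻¹' A) = volume A :=
    fun A hA => tile_key H hH S hS htile' A hA
  set δ : ℝ≥0∞ := ENNReal.ofReal (1 / 2 ^ (n + 1)) with hδdef
  have hδpos : 0 < δ := by
    rw [hδdef]; exact ENNReal.ofReal_pos.2 (by positivity)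
  obtain ⟨R, hR1, hRtail⟩ : ∃ R : ℝ, 1 ≤ R ∧ μ (Metric.closedBall 0 R)ᶜ ≤ δ := by
    have h0 : Filter.Tendsto (μ ∘ fun m : ℕ => (Metric.closedBall (0 : EuclideanSpace ℝ (Fin n)) m)ᶜ)
        Filter.atTop (𝓝 (μ (⋂ m : ℕ, (Metric.closedBall (0 : EuclideanSpace ℝ (Fin n)) m)ᶜ))) :=
      tendsto_measure_iInter_atTop
        (fun m => measurableSet_closedBall.compl.nullMeasurableSet)
        (fun m k hmk => Set.compl_subset_compl.2
          (Metric.closedBall_subset_closedBall (by exact_mod_cast hmk)))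
        ⟨0, measure_ne_top μ _⟩
    have hiInt : (⋂ m : ℕ, (Metric.closedBall (0 : EuclideanSpace ℝ (Fin n)) (m : ℝ))ᶜ) = ∅ := by
      ext u
      simp only [Set.mem_iInter, Set.mem_compl_iff, Metric.mem_closedBall, dist_zero_right,
        Set.mem_empty_iff_false, iff_false, not_forall, not_not]
      exact exists_nat_ge ‖u‖
    rw [hiInt, measure_empty] at h0
    obtain ⟨m, hm⟩ := (h0.eventually_le_const hδpos).exists
    refine ⟨max m 1, le_max_right _ _, le_trans ?_ hm⟩
    exact measure_mono (Set.compl_subset_compl.2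
      (Metric.closedBall_subset_closedBall (le_max_left _ _)))
  have hRpos : (0 : ℝ) < R := lt_of_lt_of_le one_pos hR1
  refine ⟨4 * R, by positivity, fun x => ?_⟩
  by_contra hcon
  push_neg at hcon
  -- the middle cube of side 2R
  set Q' : Set (EuclideanSpace ℝ (Fin n)) :=
    {w | ∀ i, x i + R ≤ w i ∧ w i ≤ x i + 3 * R} with hQ'def
  have hQ'meas : MeasurableSet Q' := box_meas _ _
  have hQ'vol : volume Q' = ENNReal.ofReal ((2 * R) ^ n) := by
    rw [hQ'def, box_vol]
    have : ∀ i : Fin n, ENNReal.ofReal (x i + 3 * R - (x i + R)) = ENNReal.ofReal (2 * R) := by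
      intro i; congr 1; ring
    rw [Finset.prod_congr rfl fun i _ => this i, Finset.prod_const, Finset.card_univ,
      Fintype.card_fin, ← ENNReal.ofReal_pow (by positivity)]
  set N : EuclideanSpace ℝ (Fin n) → ℝ≥0∞ := fun u =>
    ∑' α : S, Set.indicator ((· + u) ⁻¹' Q') (fun _ => (1 : ℝ≥0∞)) (α : EuclideanSpace ℝ (Fin n))
    with hNdef
  -- Claim B : volume Q' = ∫⁻ N * H
  have hB : volume Q' = ∫⁻ u, N u * H u ∂volume := by
    rw [← key Q' hQ'meas]
    calc ∑' α : S, μ ((· + (α : EuclideanSpace ℝ (Fin n))) ⁻¹' Q')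
        = ∑' α : S, ∫⁻ u, Set.indicator ((· + (α : EuclideanSpace ℝ (Fin n))) ⁻¹' Q')
            (fun _ => (1 : ℝ≥0∞)) u * H u ∂volume := by
          refine tsum_congr fun α => ?_
          have hm : MeasurableSet ((· + (α : EuclideanSpace ℝ (Fin n))) ⁻¹' Q') :=
            hQ'meas.preimage (measurable_add_const _)
          rw [hμdef, withDensity_apply _ hm, ← lintegral_indicator hm _]
          refine lintegral_congr fun u => ?_
          by_cases hu : u ∈ (· + (α : EuclideanSpace ℝ (Fin n))) ⁻¹' Q'
          · simp [Set.indicator_of_mem hu]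
          · simp [Set.indicator_of_notMem hu]
      _ = ∫⁻ u, ∑' α : S, Set.indicator ((· + (α : EuclideanSpace ℝ (Fin n))) ⁻¹' Q')
            (fun _ => (1 : ℝ≥0∞)) u * H u ∂volume := by
          refine (lintegral_tsum fun α => ?_).symm
          exact ((measurable_const.indicator
            (hQ'meas.preimage (measurable_add_const _))).aemeasurable).mul hH
      _ = ∫⁻ u, N u * H u ∂volume := by
          refine lintegral_congr fun u => ?_
          rw [hNdef, ← ENNReal.tsum_mul_right]
          refine tsum_congr fun α => ?_
          congr 1
          rw [Set.indicator_apply, Set.indicator_apply]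
          simp only [Set.mem_preimage]
          rw [add_comm]
  -- Claim C : N vanishes on the closed ball
  have hNC : ∀ u ∈ Metric.closedBall (0 : EuclideanSpace ℝ (Fin n)) R, N u = 0 := by
    intro u hu
    rw [hNdef]
    refine ENNReal.tsum_eq_zero.2 fun α => ?_
    refine Set.indicator_of_notMem ?_ _
    intro hmem
    rw [Set.mem_preimage] at hmem
    obtain ⟨i, hi⟩ := hcon (α : EuclideanSpace ℝ (Fin n)) α.2
    have hui : |u i| ≤ R := by
      rw [Metric.mem_closedBall, dist_zero_right] at hu
      exact (coord_abs_le_norm u i).trans hu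
    have habs := abs_le.1 hui
    have h1 : x i + R ≤ (α : EuclideanSpace ℝ (Fin n)) i + u i := (hmem i).1
    have h2 : (α : EuclideanSpace ℝ (Fin n)) i + u i ≤ x i + 3 * R := (hmem i).2
    rcases le_or_gt (x i) ((α : EuclideanSpace ℝ (Fin n)) i) with hle | hlt
    · have := hi hle
      linarith
    · linarith
  -- Claim A : uniform bound on N
  have hNA : ∀ u : EuclideanSpace ℝ (Fin n), N u * (1 - δ) ≤ ENNReal.ofReal ((4 * R) ^ n) := by
    intro u
    set Q'' : Set (EuclideanSpace ℝ (Fin n)) :=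
      {w | ∀ i, x i - u i ≤ w i ∧ w i ≤ x i + 4 * R - u i} with hQ''def
    have hQ''meas : MeasurableSet Q'' := box_meas _ _
    have hQ''vol : volume Q'' = ENNReal.ofReal ((4 * R) ^ n) := by
      rw [hQ''def, box_vol]
      have : ∀ i : Fin n, ENNReal.ofReal (x i + 4 * R - u i - (x i - u i))
          = ENNReal.ofReal (4 * R) := by intro i; congr 1; ring
      rw [Finset.prod_congr rfl fun i _ => this i, Finset.prod_const, Finset.card_univ,
        Fintype.card_fin, ← ENNReal.ofReal_pow (by positivity)]
    have hball : 1 - δ ≤ μ (Metric.closedBall (0 : EuclideanSpace ℝ (Fin n)) R) := by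
      rw [tsub_le_iff_right]
      calc (1 : ℝ≥0∞) = μ Set.univ := hμuniv.symm
        _ = μ (Metric.closedBall (0 : EuclideanSpace ℝ (Fin n)) R
              ∪ (Metric.closedBall (0 : EuclideanSpace ℝ (Fin n)) R)ᶜ) := by
            rw [Set.union_compl_self]
        _ ≤ μ (Metric.closedBall (0 : EuclideanSpace ℝ (Fin n)) R)
              + μ (Metric.closedBall (0 : EuclideanSpace ℝ (Fin n)) R)ᶜ := measure_union_le _ _
        _ ≤ _ := add_le_add_right hRtail _
    calc N u * (1 - δ)
        = ∑' α : S, Set.indicator ((· + u) ⁻¹' Q') (fun _ => (1 : ℝ≥0∞))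
            (α : EuclideanSpace ℝ (Fin n)) * (1 - δ) := (ENNReal.tsum_mul_right).symm
      _ ≤ ∑' α : S, μ ((· + (α : EuclideanSpace ℝ (Fin n))) ⁻¹' Q'') := by
          refine ENNReal.tsum_le_tsum fun α => ?_
          by_cases hα : (α : EuclideanSpace ℝ (Fin n)) ∈ (· + u) ⁻¹' Q'
          · rw [Set.indicator_of_mem hα, one_mul]
            refine hball.trans (measure_mono ?_)
            intro v hv
            rw [Set.mem_preimage]
            intro i
            have hvi : |v i| ≤ R := by
              rw [Metric.mem_closedBall, dist_zero_right] at hv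
              exact (coord_abs_le_norm v i).trans hv
            have habs := abs_le.1 hvi
            rw [Set.mem_preimage] at hα
            have h1 : x i + R ≤ (α : EuclideanSpace ℝ (Fin n)) i + u i := (hα i).1
            have h2 : (α : EuclideanSpace ℝ (Fin n)) i + u i ≤ x i + 3 * R := (hα i).2
            have hva : (v + (α : EuclideanSpace ℝ (Fin n))) i
                = v i + (α : EuclideanSpace ℝ (Fin n)) i := rfl
            simp only [Set.mem_setOf_eq]
            rw [hva]
            exact ⟨by linarith, by linarith⟩
          · rw [Set.indicator_of_notMem hα, zero_mul]
            exact zero_le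
      _ = volume Q'' := key _ hQ''meas
      _ = ENNReal.ofReal ((4 * R) ^ n) := hQ''vol
  -- final chain
  have hδne : (1 : ℝ≥0∞) - δ ≠ ⊤ := ne_top_of_le_ne_top ENNReal.one_ne_top tsub_le_self
  have hVne : ENNReal.ofReal ((4 * R) ^ n) ≠ ⊤ := ENNReal.ofReal_ne_top
  have hmc : MeasurableSet (Metric.closedBall (0 : EuclideanSpace ℝ (Fin n)) R)ᶜ :=
    measurableSet_closedBall.compl
  have final : ENNReal.ofReal ((2 * R) ^ n) * (1 - δ)
      ≤ ENNReal.ofReal ((4 * R) ^ n) * δ := by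
    calc ENNReal.ofReal ((2 * R) ^ n) * (1 - δ)
        = (∫⁻ u, N u * H u ∂volume) * (1 - δ) := by rw [← hQ'vol, hB]
      _ = ∫⁻ u, N u * H u * (1 - δ) ∂volume := (lintegral_mul_const' _ _ hδne).symm
      _ ≤ ∫⁻ u, Set.indicator (Metric.closedBall (0 : EuclideanSpace ℝ (Fin n)) R)ᶜ
            (fun _ => ENNReal.ofReal ((4 * R) ^ n)) u * H u ∂volume := by
          refine lintegral_mono fun u => ?_
          by_cases hu : u ∈ (Metric.closedBall (0 : EuclideanSpace ℝ (Fin n)) R)ᶜ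
          · rw [Set.indicator_of_mem hu]
            calc N u * H u * (1 - δ) = N u * (1 - δ) * H u := by ring
              _ ≤ ENNReal.ofReal ((4 * R) ^ n) * H u := mul_le_mul_left (hNA u) _
          · have hu' : u ∈ Metric.closedBall (0 : EuclideanSpace ℝ (Fin n)) R :=
              Set.notMem_compl_iff.1 hu
            rw [Set.indicator_of_notMem hu, hNC u hu']
            simp
      _ = ENNReal.ofReal ((4 * R) ^ n)
            * μ (Metric.closedBall (0 : EuclideanSpace ℝ (Fin n)) R)ᶜ := by
          calc ∫⁻ u, Set.indicator (Metric.closedBall (0 : EuclideanSpace ℝ (Fin n)) R)ᶜ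
                (fun _ => ENNReal.ofReal ((4 * R) ^ n)) u * H u ∂volume
              = ∫⁻ u, Set.indicator (Metric.closedBall (0 : EuclideanSpace ℝ (Fin n)) R)ᶜ
                  (fun y => ENNReal.ofReal ((4 * R) ^ n) * H y) u ∂volume := by
                refine lintegral_congr fun u => ?_
                by_cases hu : u ∈ (Metric.closedBall (0 : EuclideanSpace ℝ (Fin n)) R)ᶜ <;>
                  simp [Set.indicator_of_mem, Set.indicator_of_notMem, hu]
            _ = ∫⁻ u in (Metric.closedBall (0 : EuclideanSpace ℝ (Fin n)) R)ᶜ,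
                  ENNReal.ofReal ((4 * R) ^ n) * H u ∂volume := lintegral_indicator hmc _
            _ = ENNReal.ofReal ((4 * R) ^ n)
                  * ∫⁻ u in (Metric.closedBall (0 : EuclideanSpace ℝ (Fin n)) R)ᶜ, H u ∂volume :=
                lintegral_const_mul' _ _ hVne
            _ = _ := by rw [hμdef, withDensity_apply _ hmc]
      _ ≤ ENNReal.ofReal ((4 * R) ^ n) * δ := mul_le_mul_right hRtail _
  have h1δ : (1 : ℝ≥0∞) - δ = ENNReal.ofReal (1 - 1 / 2 ^ (n + 1)) := by
    rw [hδdef, ← ENNReal.ofReal_one, ← ENNReal.ofReal_sub _ (by positivity)]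
  rw [h1δ, ← ENNReal.ofReal_mul (by positivity), hδdef,
    ← ENNReal.ofReal_mul (by positivity),
    ENNReal.ofReal_le_ofReal_iff (by positivity)] at final
  -- final : (2*R)^n * (1 - 1/2^(n+1)) ≤ (4*R)^n * (1/2^(n+1))
  have ha : (0 : ℝ) < (2 * R) ^ n := by positivity
  have h4 : ((4 : ℝ) * R) ^ n = 2 ^ n * (2 * R) ^ n := by
    rw [← mul_pow]; ring_nf
  have hkey2 : (1 : ℝ) - 1 / 2 ^ (n + 1) ≤ 2 ^ n * (1 / 2 ^ (n + 1)) := by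
    rw [h4] at final
    have h' : (2 * R) ^ n * (1 - 1 / 2 ^ (n + 1))
        ≤ (2 * R) ^ n * (2 ^ n * (1 / 2 ^ (n + 1))) := by linarith [final]
    exact (mul_le_mul_iff_right₀ ha).1 h'
  have h2c : (2 : ℝ) ^ n * (1 / 2 ^ (n + 1)) = 1 / 2 := by
    rw [pow_succ]; field_simp
  have hc4 : (1 : ℝ) / 2 ^ (n + 1) ≤ 1 / 4 := by
    apply one_div_le_one_div_of_le
    · norm_num
    · calc (4 : ℝ) = 2 ^ 2 := by norm_num
        _ ≤ 2 ^ (n + 1) := by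
          apply pow_le_pow_right₀ (by norm_num)
          omega
  rw [h2c] at hkey2
  linarith
end

section
/- Let E ⊂ ℝ^d be a bounded measurable set of positive measure, A, B ⊂ ℝ^d countable, and suppose {χ_E(x−a)e^{−2πi x·b}}_{(a,b)∈A×B} is an orthonormal basis for L²(ℝ^d) (after normalization by |E|^{−1/2}). Then {e^{−2πi x·b}}_{b∈B} is an orthogonal basis for L²(E). -/
open MeasureTheory Real
open scoped RealInnerProductSpace

/-- The normalized Gabor window function of a set `E`:
`x ↦ |E|^{-1/2} χ_E(x - a) e^{-2πi x·b}` for `p = (a,b)`. -/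
noncomputable def gaborFun {d : ℕ} (E : Set (EuclideanSpace ℝ (Fin d)))
    (p : EuclideanSpace ℝ (Fin d) × EuclideanSpace ℝ (Fin d))
    (x : EuclideanSpace ℝ (Fin d)) : ℂ :=
  E.indicator (fun _ => (((volume E).toReal ^ (-(1:ℝ)/2) : ℝ) : ℂ)) (x - p.1) *
    Complex.exp (-2 * π * Complex.I * ((⟪x, p.2⟫ : ℝ) : ℂ))

private lemma conj_exp' (r : ℝ) :
    (starRingEnd ℂ) (Complex.exp (-2*π*Complex.I*(r:ℂ))) = Complex.exp (2*π*Complex.I*(r:ℂ)) := by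
  rw [← Complex.exp_conj]; congr 1
  simp only [map_mul, map_neg, Complex.conj_I, Complex.conj_ofReal, map_ofNat]
  ring_nf

private lemma conj_ind' {d : ℕ} (E : Set (EuclideanSpace ℝ (Fin d))) (c : ℝ)
    (y : EuclideanSpace ℝ (Fin d)) :
    (starRingEnd ℂ) (E.indicator (fun _ => (c : ℂ)) y) = E.indicator (fun _ => (c:ℂ)) y := by
  classical
  simp only [Set.indicator_apply]
  split <;> simp [Complex.conj_ofReal]

private lemma exp_mul_exp' (r s : ℝ) :
    Complex.exp (-2*π*Complex.I*(r:ℂ)) * Complex.exp (2*π*Complex.I*(s:ℂ))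
    = Complex.exp (-2*π*Complex.I*((r - s : ℝ):ℂ)) := by
  rw [← Complex.exp_add]; push_cast; ring_nf

private lemma exp_add_negtwo {d : ℕ} (u y a : EuclideanSpace ℝ (Fin d)) :
    Complex.exp (-2*π*Complex.I*((⟪y + a, u⟫ : ℝ):ℂ))
      = Complex.exp (-2*π*Complex.I*((⟪a, u⟫ : ℝ):ℂ)) *
        Complex.exp (-2*π*Complex.I*((⟪y, u⟫ : ℝ):ℂ)) := by
  rw [← Complex.exp_add]; congr 1
  push_cast [inner_add_left]; ring

private lemma exp_add_postwo {d : ℕ} (u y a : EuclideanSpace ℝ (Fin d)) :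
    Complex.exp (2*π*Complex.I*((⟪y + a, u⟫ : ℝ):ℂ))
      = Complex.exp (2*π*Complex.I*((⟪a, u⟫ : ℝ):ℂ)) *
        Complex.exp (2*π*Complex.I*((⟪y, u⟫ : ℝ):ℂ)) := by
  rw [← Complex.exp_add]; congr 1
  push_cast [inner_add_left]; ring

private lemma conj_gabor {d : ℕ} (E : Set (EuclideanSpace ℝ (Fin d)))
    (a b x : EuclideanSpace ℝ (Fin d)) :
    (starRingEnd ℂ) (gaborFun E (a, b) x)
      = E.indicator (fun _ => (((volume E).toReal ^ (-(1:ℝ)/2) : ℝ) : ℂ)) (x - a) *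
        Complex.exp (2 * π * Complex.I * ((⟪x, b⟫ : ℝ) : ℂ)) := by
  unfold gaborFun
  rw [map_mul, conj_ind', conj_exp']

private lemma gabor_mul_conj {d : ℕ} (E : Set (EuclideanSpace ℝ (Fin d)))
    (a a' b b' x : EuclideanSpace ℝ (Fin d)) :
    gaborFun E (a, b) x * (starRingEnd ℂ) (gaborFun E (a', b') x)
      = E.indicator (fun _ => (((volume E).toReal ^ (-(1:ℝ)/2) : ℝ) : ℂ)) (x - a) *
        E.indicator (fun _ => (((volume E).toReal ^ (-(1:ℝ)/2) : ℝ) : ℂ)) (x - a') *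
        Complex.exp (-2 * π * Complex.I * ((⟪x, b - b'⟫ : ℝ) : ℂ)) := by
  rw [conj_gabor]
  unfold gaborFun
  rw [mul_mul_mul_comm, exp_mul_exp', ← inner_sub_right]

/-- If the Gabor system with window `|E|^{-1/2}χ_E` and separable spectrum `A × B` is an
orthonormal basis for `L²(ℝ^d)`, then `{e^{-2πi x·b}}_{b∈B}` is an orthogonal basis for
`L²(E)`: the exponentials are mutually orthogonal on `E` and complete in `L²(E)`. -/
theorem separable_gabor_gives_exponential_basis {d : ℕ} (hd : 1 ≤ d)
    (E : Set (EuclideanSpace ℝ (Fin d))) (hEm : MeasurableSet E)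
    (hEb : Bornology.IsBounded E) (hEpos : 0 < volume E)
    (A B : Set (EuclideanSpace ℝ (Fin d))) (hA : A.Countable) (hB : B.Countable)
    (horth : ∀ p ∈ A ×ˢ B, ∀ q ∈ A ×ˢ B, p ≠ q →
      ∫ x, gaborFun E p x * (starRingEnd ℂ) (gaborFun E q x) = 0)
    (hnorm : ∀ p ∈ A ×ˢ B, ∫ x, ‖gaborFun E p x‖ ^ 2 = 1)
    (hcomplete : ∀ f : EuclideanSpace ℝ (Fin d) → ℂ, MemLp f 2 volume →
      (∀ p ∈ A ×ˢ B, ∫ x, f x * (starRingEnd ℂ) (gaborFun E p x) = 0) →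
      f =ᵐ[volume] 0) :
    (∀ b ∈ B, ∀ b' ∈ B, b ≠ b' →
      ∫ x in E, Complex.exp (-2 * π * Complex.I * ((⟪x, b - b'⟫ : ℝ) : ℂ)) = 0) ∧
    (∀ f : EuclideanSpace ℝ (Fin d) → ℂ, MemLp f 2 (volume.restrict E) →
      (∀ b ∈ B, ∫ x in E, f x * Complex.exp (2 * π * Complex.I * ((⟪x, b⟫ : ℝ) : ℂ)) = 0) →
      f =ᵐ[volume.restrict E] 0) := by
  classical
  set c : ℝ := (volume E).toReal ^ (-(1:ℝ)/2) with hc_def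
  have hEfin : volume E ≠ ⊤ := hEb.measure_lt_top.ne
  have hcpos : 0 < c := Real.rpow_pos_of_pos (ENNReal.toReal_pos hEpos.ne' hEfin) _
  have hcC : ((c:ℂ)) ≠ 0 := by exact_mod_cast Complex.ofReal_ne_zero.2 hcpos.ne'
  -- A × B is nonempty
  have hne : (A ×ˢ B).Nonempty := by
    by_contra h
    rw [Set.not_nonempty_iff_eq_empty] at h
    have h0 := hcomplete (E.indicator fun _ => (1:ℂ))
      (memLp_indicator_const 2 hEm 1 (Or.inr hEfin)) (by simp [h])
    have h2 : ∀ᵐ x ∂volume.restrict E, False := by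
      filter_upwards [ae_restrict_of_ae h0, ae_restrict_mem hEm] with x hx hxE
      rw [Set.indicator_of_mem hxE] at hx
      exact one_ne_zero hx
    rw [ae_iff] at h2
    simp only [not_false_iff, Set.setOf_true, Measure.restrict_apply_univ] at h2
    exact hEpos.ne' h2
  obtain ⟨⟨a₀, b₀⟩, hab⟩ := hne
  have ha₀ : a₀ ∈ A := hab.1
  have hb₀ : b₀ ∈ B := hab.2
  -- translation lemma
  have transl : ∀ (φ : EuclideanSpace ℝ (Fin d) → ℂ) (h : EuclideanSpace ℝ (Fin d) → ℂ)
      (a : EuclideanSpace ℝ (Fin d)),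
      ∫ x, E.indicator φ (x - a) * h x = ∫ y in E, φ y * h (y + a) := by
    intro φ h a
    rw [← integral_add_right_eq_self (fun x => E.indicator φ (x - a) * h x) a]
    simp only [add_sub_cancel_right]
    rw [← integral_indicator hEm]
    congr 1; funext y
    by_cases hy : y ∈ E <;> simp [hy]
  -- Part 1
  have part1 : ∀ b ∈ B, ∀ b' ∈ B, b ≠ b' →
      ∫ x in E, Complex.exp (-2 * π * Complex.I * ((⟪x, b - b'⟫ : ℝ) : ℂ)) = 0 := by
    intro b hb b' hb' hbb
    have h0 := horth (a₀, b) (Set.mk_mem_prod ha₀ hb) (a₀, b') (Set.mk_mem_prod ha₀ hb')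
      (by simp [Prod.ext_iff, hbb])
    simp only [gabor_mul_conj] at h0
    have h1 : ∫ x, E.indicator (fun _ => ((c:ℂ) * c)) (x - a₀) *
        Complex.exp (-2 * π * Complex.I * ((⟪x, b - b'⟫ : ℝ) : ℂ)) = 0 := by
      rw [← h0]
      refine integral_congr_ae (.of_forall fun x => ?_)
      by_cases hx : x - a₀ ∈ E <;> simp [hx, hc_def]
    rw [transl] at h1
    have h2 : ∫ y in E, ((c:ℂ) * c * Complex.exp (-2 * π * Complex.I * ((⟪a₀, b - b'⟫ : ℝ) : ℂ))) *
        Complex.exp (-2 * π * Complex.I * ((⟪y, b - b'⟫ : ℝ) : ℂ)) = 0 := by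
      rw [← h1]
      refine integral_congr_ae (.of_forall fun y => ?_)
      simp only [exp_add_negtwo]
      ring
    rw [integral_const_mul] at h2
    rcases mul_eq_zero.1 h2 with h3 | h3
    · exact absurd h3 (by
        refine mul_ne_zero (mul_ne_zero hcC hcC) (Complex.exp_ne_zero _))
    · exact h3
  refine ⟨part1, ?_⟩
  -- disjointness of translates
  have hdisj : ∀ a ∈ A, a ≠ a₀ →
      volume {x : EuclideanSpace ℝ (Fin d) | x - a₀ ∈ E ∧ x - a ∈ E} = 0 := by
    intro a ha hne'
    set S : Set (EuclideanSpace ℝ (Fin d)) := {x | x - a₀ ∈ E ∧ x - a ∈ E} with hS_def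
    have hSm : MeasurableSet S :=
      (hEm.preimage (measurable_sub_const a₀)).inter (hEm.preimage (measurable_sub_const a))
    have h0 := horth (a₀, b₀) (Set.mk_mem_prod ha₀ hb₀) (a, b₀) (Set.mk_mem_prod ha hb₀)
      (by simp [Prod.ext_iff]; intro h; exact absurd h.symm hne')
    simp only [gabor_mul_conj] at h0
    have h1 : ∫ x, S.indicator (fun _ => ((c:ℂ) * c)) x = 0 := by
      rw [← h0]
      refine integral_congr_ae (.of_forall fun x => ?_)
      by_cases h₁ : x - a₀ ∈ E <;> by_cases h₂ : x - a ∈ E <;>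
        simp [Set.indicator_apply, hS_def, h₁, h₂, sub_self, hc_def]
    rw [integral_indicator_const _ hSm] at h1
    have h2 : (volume S).toReal = 0 := by
      rcases smul_eq_zero.1 h1 with h | h
      · exact h
      · exact absurd h (mul_ne_zero hcC hcC)
    have hfin : volume S ≠ ⊤ := by
      have hle : volume S ≤ volume ((fun x => x - a₀) ⁻¹' E) :=
        measure_mono (fun x hx => hx.1)
      have heq : volume ((fun x => x - a₀) ⁻¹' E) = volume E :=
        (measurePreserving_sub_right volume a₀).measure_preimage hEm.nullMeasurableSet
      exact ((hle.trans_lt (heq ▸ hEfin.lt_top)).ne)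
    exact (ENNReal.toReal_eq_zero_iff _).1 h2 |>.resolve_right hfin
  -- Part 2
  intro f hf hforth
  set g : EuclideanSpace ℝ (Fin d) → ℂ := fun x => E.indicator f (x - a₀) with hg_def
  have hgL2 : MemLp g 2 volume :=
    ((memLp_indicator_iff_restrict hEm).2 hf).comp_measurePreserving
      (measurePreserving_sub_right volume a₀)
  have hcond : ∀ p ∈ A ×ˢ B, ∫ x, g x * (starRingEnd ℂ) (gaborFun E p x) = 0 := by
    rintro ⟨a, b⟩ hab'
    have ha : a ∈ A := hab'.1
    have hb : b ∈ B := hab'.2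
    by_cases haa : a = a₀
    · subst haa
      have h1 : ∫ x, g x * (starRingEnd ℂ) (gaborFun E (a, b) x)
          = ∫ x, E.indicator (fun y => f y * (c:ℂ)) (x - a) *
              Complex.exp (2 * π * Complex.I * ((⟪x, b⟫ : ℝ) : ℂ)) := by
        refine integral_congr_ae (.of_forall fun x => ?_)
        simp only [conj_gabor, hg_def]
        by_cases hx : x - a ∈ E <;> simp [hx] <;> ring
      rw [h1, transl]
      have h2 : ∫ y in E, (f y * (c:ℂ)) * Complex.exp (2 * π * Complex.I * ((⟪y + a, b⟫ : ℝ) : ℂ))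
          = ∫ y in E, ((c:ℂ) * Complex.exp (2 * π * Complex.I * ((⟪a, b⟫ : ℝ) : ℂ))) *
              (f y * Complex.exp (2 * π * Complex.I * ((⟪y, b⟫ : ℝ) : ℂ))) := by
        refine integral_congr_ae (.of_forall fun y => ?_)
        simp only [exp_add_postwo]
        ring
      rw [h2, integral_const_mul, hforth b hb, mul_zero]
    · have hS := hdisj a ha haa
      have hae : (fun x => g x * (starRingEnd ℂ) (gaborFun E (a, b) x)) =ᵐ[volume] 0 := by
        filter_upwards [measure_eq_zero_iff_ae_notMem.mp hS] with x hx
        simp only [Set.mem_setOf_eq, not_and_or] at hx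
        rw [conj_gabor, hg_def]
        rcases hx with hx | hx
        · simp [Set.indicator_of_notMem hx]
        · simp [Set.indicator_of_notMem hx]
      exact integral_eq_zero_of_ae hae
  have h0 := hcomplete g hgL2 hcond
  have h1 : (fun y => g (y + a₀)) =ᵐ[volume] (fun _ => (0:ℂ)) := by
    have := ae_eq_comp (f := fun y : EuclideanSpace ℝ (Fin d) => y + a₀) (g := g)
      (g' := (0 : EuclideanSpace ℝ (Fin d) → ℂ))
      (measurable_add_const a₀).aemeasurable
      (by rw [(measurePreserving_add_right volume a₀).map_eq]; exact h0)
    exact this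
  have h2 : E.indicator f =ᵐ[volume] (fun _ => (0:ℂ)) := by
    filter_upwards [h1] with y hy
    simpa [hg_def, add_sub_cancel_right] using hy
  filter_upwards [ae_restrict_of_ae h2, ae_restrict_mem hEm] with x hx hxE
  rw [Set.indicator_of_mem hxE] at hx
  exact hx
end

section
/- Let E ⊂ ℝ^d be a bounded measurable set of positive measure and suppose {χ_E(x−a)e^{−2πi x·b}}_{(a,b)∈A×B} (with S = A×B) is an orthonormal basis for L²(ℝ^d) after normalization. Then E tiles ℝ^d by translations along A, i.e., ∑_{a∈A} χ_E(x−a) = 1 for almost every x ∈ ℝ^d. -/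
open MeasureTheory Real
open scoped RealInnerProductSpace

/-- An indicator of constant `1` that is a.e. zero has null support set. -/
lemma aux_indicator_ae_zero {α : Type*} [MeasurableSpace α] {μ : Measure α} {S : Set α}
    (h : S.indicator (fun _ => (1 : ℂ)) =ᵐ[μ] 0) : μ S = 0 := by
  have h' : ∀ᵐ x ∂μ, S.indicator (fun _ => (1 : ℂ)) x = 0 := h
  refine measure_mono_null (fun x hx => ?_) (ae_iff.mp h')
  simpa [Set.indicator_of_mem hx] using hx

/-- If the Gabor system with window `|E|^{-1/2}χ_E` and separable spectrum `A × B` is an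
orthonormal basis for `L²(ℝ^d)`, then `E` tiles `ℝ^d` by translations along `A`:
`∑_{a∈A} χ_E(x-a) = 1` for almost every `x`. -/
theorem separable_gabor_implies_tiling {d : ℕ} (hd : 1 ≤ d)
    (E : Set (EuclideanSpace ℝ (Fin d))) (hEm : MeasurableSet E)
    (hEb : Bornology.IsBounded E) (hEpos : 0 < volume E)
    (A B : Set (EuclideanSpace ℝ (Fin d))) (hA : A.Countable) (hB : B.Countable)
    (horth : ∀ p ∈ A ×ˢ B, ∀ q ∈ A ×ˢ B, p ≠ q →
      ∫ x, gaborFun E p x * (starRingEnd ℂ) (gaborFun E q x) = 0)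
    (hnorm : ∀ p ∈ A ×ˢ B, ∫ x, ‖gaborFun E p x‖ ^ 2 = 1)
    (hcomplete : ∀ f : EuclideanSpace ℝ (Fin d) → ℂ, MemLp f 2 volume →
      (∀ p ∈ A ×ˢ B, ∫ x, f x * (starRingEnd ℂ) (gaborFun E p x) = 0) →
      f =ᵐ[volume] 0) :
    ∀ᵐ x : EuclideanSpace ℝ (Fin d) ∂volume,
      ∑' a : A, E.indicator (fun _ => (1 : ℝ)) (x - (a : EuclideanSpace ℝ (Fin d))) = 1 := by
  have hEfin : volume E ≠ ⊤ := hEb.measure_lt_top.ne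
  set c : ℝ := (volume E).toReal ^ (-(1:ℝ)/2) with hc_def
  have hc : 0 < c := Real.rpow_pos_of_pos (ENNReal.toReal_pos hEpos.ne' hEfin) _
  -- measurability and finiteness of translates
  have hmeasT : ∀ a : EuclideanSpace ℝ (Fin d), MeasurableSet {x : EuclideanSpace ℝ (Fin d) | x - a ∈ E} :=
    fun a => hEm.preimage (measurable_sub_const a)
  have hvolT : ∀ a : EuclideanSpace ℝ (Fin d), volume {x : EuclideanSpace ℝ (Fin d) | x - a ∈ E} = volume E := by
    intro a
    have : {x : EuclideanSpace ℝ (Fin d) | x - a ∈ E} = (fun x => x + (-a)) ⁻¹' E := by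
      ext x; simp [sub_eq_add_neg]
    rw [this, measure_preimage_add_right]
  -- B is nonempty
  have hBne : B.Nonempty := by
    by_contra hB0
    rw [Set.not_nonempty_iff_eq_empty] at hB0
    have hmem : MemLp (E.indicator (fun _ => (1:ℂ))) 2 volume :=
      memLp_indicator_const 2 hEm 1 (Or.inr hEfin)
    have h0 := hcomplete _ hmem (by simp [hB0])
    exact absurd (aux_indicator_ae_zero h0) hEpos.ne'
  obtain ⟨b, hb⟩ := hBne
  -- overlaps of distinct translates are null
  have hover : ∀ a ∈ A, ∀ a' ∈ A, a ≠ a' →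
      volume {x : EuclideanSpace ℝ (Fin d) | x - a ∈ E ∧ x - a' ∈ E} = 0 := by
    intro a ha a' ha' hne
    have h0 := horth (a, b) (Set.mem_prod.mpr ⟨ha, hb⟩) (a', b) (Set.mem_prod.mpr ⟨ha', hb⟩)
      (by simp [Prod.ext_iff, hne])
    have hpt : ∀ x : EuclideanSpace ℝ (Fin d), gaborFun E (a, b) x * (starRingEnd ℂ) (gaborFun E (a', b) x)
        = Set.indicator {x : EuclideanSpace ℝ (Fin d) | x - a ∈ E ∧ x - a' ∈ E} (fun _ => ((c^2 : ℝ) : ℂ)) x := by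
      intro x
      set z := Complex.exp (-2 * π * Complex.I * ((⟪x, b⟫ : ℝ) : ℂ)) with hz_def
      have hexp : z * (starRingEnd ℂ) z = 1 := by
        rw [hz_def, ← Complex.exp_conj, ← Complex.exp_add, Complex.add_conj]
        norm_num [Complex.exp_eq_one_iff]
      have e1 : gaborFun E (a, b) x = E.indicator (fun _ => ((c:ℝ) : ℂ)) (x - a) * z := rfl
      have e2 : gaborFun E (a', b) x = E.indicator (fun _ => ((c:ℝ) : ℂ)) (x - a') * z := rfl
      rw [e1, e2]
      by_cases h1 : x - a ∈ E
      · by_cases h2 : x - a' ∈ E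
        · rw [Set.indicator_of_mem h1, Set.indicator_of_mem h2,
            Set.indicator_of_mem (show x ∈ {x : EuclideanSpace ℝ (Fin d) | x - a ∈ E ∧ x - a' ∈ E} from ⟨h1, h2⟩)]
          rw [map_mul, Complex.conj_ofReal]
          calc (c:ℂ) * z * ((c:ℂ) * (starRingEnd ℂ) z)
              = (c:ℂ)^2 * (z * (starRingEnd ℂ) z) := by ring
            _ = (c:ℂ)^2 := by rw [hexp, mul_one]
            _ = ((c^2 : ℝ) : ℂ) := by push_cast; ring
        · rw [Set.indicator_of_notMem h2,
            Set.indicator_of_notMem (show x ∉ {x : EuclideanSpace ℝ (Fin d) | x - a ∈ E ∧ x - a' ∈ E} from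
              fun h => h2 h.2)]
          simp
      · rw [Set.indicator_of_notMem h1,
          Set.indicator_of_notMem (show x ∉ {x : EuclideanSpace ℝ (Fin d) | x - a ∈ E ∧ x - a' ∈ E} from
            fun h => h1 h.1)]
        simp
    simp only [hpt] at h0
    rw [integral_indicator_const _ (show MeasurableSet {x : EuclideanSpace ℝ (Fin d) | x - a ∈ E ∧ x - a' ∈ E} from (hmeasT a).inter (hmeasT a'))] at h0
    have hfin : volume {x : EuclideanSpace ℝ (Fin d) | x - a ∈ E ∧ x - a' ∈ E} ≠ ⊤ := by
      have hsub : {x : EuclideanSpace ℝ (Fin d) | x - a ∈ E ∧ x - a' ∈ E} ⊆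
          {x : EuclideanSpace ℝ (Fin d) | x - a ∈ E} := fun x hx => hx.1
      have hle : volume {x : EuclideanSpace ℝ (Fin d) | x - a ∈ E ∧ x - a' ∈ E} ≤
          volume {x : EuclideanSpace ℝ (Fin d) | x - a ∈ E} := measure_mono hsub
      rw [hvolT a] at hle
      exact (lt_of_le_of_lt hle hEb.measure_lt_top).ne
    rcases smul_eq_zero.mp h0 with h | h
    · exact (ENNReal.toReal_eq_zero_iff _).mp h |>.resolve_right hfin
    · exfalso
      have : (c:ℂ) ≠ 0 := Complex.ofReal_ne_zero.mpr hc.ne'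
      simp only [Complex.ofReal_pow] at h
      exact (pow_ne_zero 2 this) h
  -- the translates cover almost everywhere
  have hAc : Countable ↥A := hA.to_subtype
  set C : Set (EuclideanSpace ℝ (Fin d)) := ⋃ a ∈ A, {x : EuclideanSpace ℝ (Fin d) | x - a ∈ E} with hC_def
  have hCm : MeasurableSet C := MeasurableSet.biUnion hA (fun a _ => hmeasT a)
  have hcov : volume Cᶜ = 0 := by
    have hn : ∀ n : ℕ, volume (Cᶜ ∩ Metric.ball (0 : EuclideanSpace ℝ (Fin d)) n) = 0 := by
      intro n
      set S := Cᶜ ∩ Metric.ball (0 : EuclideanSpace ℝ (Fin d)) n with hS_def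
      have hSm : MeasurableSet S := hCm.compl.inter measurableSet_ball
      have hSfin : volume S ≠ ⊤ :=
        (lt_of_le_of_lt (measure_mono Set.inter_subset_right) measure_ball_lt_top).ne
      have hmem : MemLp (S.indicator (fun _ => (1:ℂ))) 2 volume :=
        memLp_indicator_const 2 hSm 1 (Or.inr hSfin)
      have horth' : ∀ p ∈ A ×ˢ B,
          ∫ x, S.indicator (fun _ => (1:ℂ)) x * (starRingEnd ℂ) (gaborFun E p x) = 0 := by
        intro p hp
        have hzero : ∀ x : EuclideanSpace ℝ (Fin d), S.indicator (fun _ => (1:ℂ)) x *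
            (starRingEnd ℂ) (gaborFun E p x) = 0 := by
          intro x
          by_cases hx : x ∈ S
          · have hxC : x ∉ C := hx.1
            have : x - p.1 ∉ E := by
              intro hmem'
              exact hxC (Set.mem_biUnion (Set.mem_prod.mp hp).1 hmem')
            simp [gaborFun, Set.indicator_of_notMem this]
          · simp [Set.indicator_of_notMem hx]
        simp only [hzero]
        exact integral_zero _ _
      exact aux_indicator_ae_zero (hcomplete _ hmem horth')
    have hU : Cᶜ = ⋃ n : ℕ, (Cᶜ ∩ Metric.ball (0 : EuclideanSpace ℝ (Fin d)) n) := by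
      ext x
      simp only [Set.mem_iUnion, Set.mem_inter_iff, Metric.mem_ball]
      constructor
      · intro hx
        obtain ⟨n, hn⟩ := exists_nat_gt (dist x (0 : EuclideanSpace ℝ (Fin d)))
        exact ⟨n, hx, hn⟩
      · rintro ⟨n, hx, -⟩; exact hx
    rw [hU]
    exact measure_iUnion_null hn
  -- combine
  have h1 : ∀ᵐ x : EuclideanSpace ℝ (Fin d) ∂volume, x ∈ C := by
    rw [ae_iff]
    exact hcov
  have h2 : ∀ᵐ x : EuclideanSpace ℝ (Fin d) ∂volume, ∀ a ∈ A, ∀ a' ∈ A, a ≠ a' →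
      ¬(x - a ∈ E ∧ x - a' ∈ E) := by
    rw [ae_ball_iff hA]
    intro a ha
    rw [ae_ball_iff hA]
    intro a' ha'
    by_cases hne : a = a'
    · filter_upwards with x h; exact absurd hne h
    · rw [ae_iff]
      refine measure_mono_null (fun x hx => ?_) (hover a ha a' ha' hne)
      simp only [Set.mem_setOf_eq] at hx
      push_neg at hx
      exact hx.2
  filter_upwards [h1, h2] with x hx1 hx2
  obtain ⟨a₀, ha₀, hxa₀⟩ := Set.mem_iUnion₂.mp hx1
  rw [tsum_eq_single (⟨a₀, ha₀⟩ : ↥A)]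
  · exact Set.indicator_of_mem (show x - a₀ ∈ E from hxa₀) _
  · rintro ⟨a, ha⟩ hne
    have hne' : a ≠ a₀ := fun h => hne (Subtype.ext h)
    by_cases hx : x - a ∈ E
    · exact absurd ⟨hx, hxa₀⟩ (hx2 a ha a₀ ha₀ hne')
    · exact Set.indicator_of_notMem hx _
end

section
/- If E ⊂ ℝ^d tiles ℝ^d by translations along a full-rank lattice L and E is spectral with spectrum the dual lattice L* (Fuglede's lattice theorem), then the Gabor system {|E|^{−1/2}χ_E(x−a)e^{−2πi x·b}}_{(a,b)∈L×L*} is an orthonormal basis for L²(ℝ^d). -/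
open MeasureTheory Real
open scoped RealInnerProductSpace

/-- Fuglede's lattice situation: if `E` tiles `ℝ^d` by a full-rank lattice `L` and is
spectral with spectrum the dual lattice `L*` (the normalized exponentials indexed by `L*`
form an orthonormal basis of `L²(E)`), then the Gabor system
`{|E|^{-1/2} χ_E(x-a) e^{-2πi x·b}}_{(a,b) ∈ L × L*}` is an orthonormal basis of `L²(ℝ^d)`. -/
theorem lattice_tiling_spectral_gabor_onb {d : ℕ} (hd : 1 ≤ d)
    (v : Module.Basis (Fin d) ℝ (EuclideanSpace ℝ (Fin d)))
    (L : Set (EuclideanSpace ℝ (Fin d)))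
    (hL : L = {x | ∃ c : Fin d → ℤ, x = ∑ i, (c i : ℝ) • v i})
    (Ldual : Set (EuclideanSpace ℝ (Fin d)))
    (hLdual : Ldual = {ξ | ∀ a ∈ L, ∃ n : ℤ, (⟪ξ, a⟫ : ℝ) = n})
    (E : Set (EuclideanSpace ℝ (Fin d))) (hEm : MeasurableSet E)
    (hEb : Bornology.IsBounded E) (hEpos : 0 < volume E)
    -- `E` tiles `ℝ^d` by `L`
    (htile : ∀ᵐ x : EuclideanSpace ℝ (Fin d) ∂volume,
      ∑' a : L, E.indicator (fun _ => (1 : ℝ)) (x - (a : EuclideanSpace ℝ (Fin d))) = 1)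
    -- `E` is spectral with spectrum `L*`: orthonormality of the normalized exponentials …
    (horthE : ∀ b ∈ Ldual, ∀ b' ∈ Ldual, b ≠ b' →
      ∫ x in E, Complex.exp (-2 * π * Complex.I * ((⟪x, b - b'⟫ : ℝ) : ℂ)) = 0)
    -- … and completeness in `L²(E)`
    (hcompE : ∀ f : EuclideanSpace ℝ (Fin d) → ℂ, MemLp f 2 (volume.restrict E) →
      (∀ b ∈ Ldual, ∫ x in E, f x * Complex.exp (2 * π * Complex.I * ((⟪x, b⟫ : ℝ) : ℂ)) = 0) →
      f =ᵐ[volume.restrict E] 0) :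
    -- orthogonality of the Gabor system
    (∀ p ∈ L ×ˢ Ldual, ∀ q ∈ L ×ˢ Ldual, p ≠ q →
      ∫ x, gaborFun E p x * (starRingEnd ℂ) (gaborFun E q x) = 0) ∧
    -- each element has norm one
    (∀ p ∈ L ×ˢ Ldual, ∫ x, ‖gaborFun E p x‖ ^ 2 = 1) ∧
    -- completeness in `L²(ℝ^d)`
    (∀ f : EuclideanSpace ℝ (Fin d) → ℂ, MemLp f 2 volume →
      (∀ p ∈ L ×ˢ Ldual, ∫ x, f x * (starRingEnd ℂ) (gaborFun E p x) = 0) →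
      f =ᵐ[volume] 0) := by
  have hvolE : volume E ≠ ⊤ := hEb.measure_lt_top.ne
  set t : ℝ := (volume E).toReal with ht
  have htpos : 0 < t := ENNReal.toReal_pos hEpos.ne' hvolE
  set c : ℝ := t ^ (-(1:ℝ)/2) with hc
  have hcpos : 0 < c := Real.rpow_pos_of_pos htpos _
  have hc2 : c ^ 2 = t⁻¹ := by
    rw [hc, ← Real.rpow_natCast (t ^ (-(1:ℝ)/2)) 2, ← Real.rpow_mul htpos.le]
    norm_num [Real.rpow_neg_one]
  -- a.e. disjointness of distinct translates
  classical
  have hdisj : ∀ a ∈ L, ∀ a' ∈ L, a ≠ a' →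
      ∀ᵐ x : EuclideanSpace ℝ (Fin d) ∂volume, ¬(x - a ∈ E ∧ x - a' ∈ E) := by
    intro a ha a' ha' hne
    filter_upwards [htile] with x hx
    rintro ⟨h1, h2⟩
    set g : L → ℝ := fun u => E.indicator (fun _ => (1:ℝ)) (x - (u : EuclideanSpace ℝ (Fin d)))
      with hgdef
    have hgnn : ∀ u, 0 ≤ g u := fun u => Set.indicator_nonneg (fun _ _ => zero_le_one) _
    by_cases hs : Summable g
    · have hsub : (⟨a, ha⟩ : L) ≠ ⟨a', ha'⟩ := fun h => hne (congrArg Subtype.val h)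
      have h2le : ∑ u ∈ ({⟨a, ha⟩, ⟨a', ha'⟩} : Finset L), g u ≤ ∑' u, g u :=
        Summable.sum_le_tsum _ (fun u _ => hgnn u) hs
      rw [hx] at h2le
      rw [Finset.sum_pair hsub] at h2le
      have e1 : g ⟨a, ha⟩ = 1 := by simp [hgdef, Set.indicator_of_mem h1]
      have e2 : g ⟨a', ha'⟩ = 1 := by simp [hgdef, Set.indicator_of_mem h2]
      rw [e1, e2] at h2le; norm_num at h2le
    · rw [tsum_eq_zero_of_not_summable hs] at hx; norm_num at hx
  -- norm of the exponential factor
  have hexp1 : ∀ (x b : EuclideanSpace ℝ (Fin d)),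
      ‖Complex.exp (-2 * π * Complex.I * ((⟪x, b⟫ : ℝ) : ℂ))‖ = 1 := by
    intro x b
    have : (-2 * (π:ℂ) * Complex.I * ((⟪x, b⟫ : ℝ) : ℂ))
        = (((-2 * π * ⟪x, b⟫ : ℝ) : ℂ)) * Complex.I := by push_cast; ring
    rw [this, Complex.norm_exp_ofReal_mul_I]
  refine ⟨?_, ?_, ?_⟩
  · -- orthogonality
    rintro ⟨a, b⟩ hp ⟨a', b'⟩ hq hne
    obtain ⟨ha, hb⟩ := hp
    obtain ⟨ha', hb'⟩ := hq
    by_cases h1 : a = a'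
    · subst h1
      have hbb : b ≠ b' := fun h => hne (by rw [h])
      -- pointwise computation after translating by a
      have key : ∀ y : EuclideanSpace ℝ (Fin d),
          gaborFun E (a, b) (y + a) * (starRingEnd ℂ) (gaborFun E (a, b') (y + a))
            = ((c^2 : ℝ) : ℂ) * Complex.exp (-2 * π * Complex.I * ((⟪a, b - b'⟫ : ℝ) : ℂ)) *
              E.indicator
                (fun z => Complex.exp (-2 * π * Complex.I * ((⟪z, b - b'⟫ : ℝ) : ℂ))) y := by
        intro y
        simp only [gaborFun, add_sub_cancel_right]
        by_cases hy : y ∈ E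
        · simp only [Set.indicator_of_mem hy]
          rw [map_mul, Complex.conj_ofReal, ← Complex.exp_conj]
          simp only [map_mul, map_neg, map_ofNat, Complex.conj_I, Complex.conj_ofReal]
          have hE : Complex.exp (-2 * (π:ℂ) * Complex.I * ((⟪y + a, b⟫ : ℝ) : ℂ)) *
              Complex.exp (-2 * (π:ℂ) * -Complex.I * ((⟪y + a, b'⟫ : ℝ) : ℂ))
              = Complex.exp (-2 * (π:ℂ) * Complex.I * ((⟪a, b - b'⟫ : ℝ) : ℂ)) *
                Complex.exp (-2 * (π:ℂ) * Complex.I * ((⟪y, b - b'⟫ : ℝ) : ℂ)) := by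
            rw [← Complex.exp_add, ← Complex.exp_add]
            congr 1
            have h1 : ⟪y + a, b⟫ = ⟪y, b⟫ + ⟪a, b⟫ := by
              rw [inner_add_left]
            have h2 : ⟪y + a, b'⟫ = ⟪y, b'⟫ + ⟪a, b'⟫ := by
              rw [inner_add_left]
            have h3 : ⟪a, b - b'⟫ = ⟪a, b⟫ - ⟪a, b'⟫ := by rw [inner_sub_right]
            have h4 : ⟪y, b - b'⟫ = ⟪y, b⟫ - ⟪y, b'⟫ := by rw [inner_sub_right]
            rw [h1, h2, h3, h4]
            push_cast
            ring
          rw [← ht, ← hc]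
          push_cast
          linear_combination (c:ℂ) * (c:ℂ) * hE
        · simp only [Set.indicator_of_notMem hy]
          simp
      calc ∫ x, gaborFun E (a, b) x * (starRingEnd ℂ) (gaborFun E (a, b') x)
          = ∫ y, gaborFun E (a, b) (y + a) * (starRingEnd ℂ) (gaborFun E (a, b') (y + a)) :=
            (integral_add_right_eq_self _ a).symm
        _ = ∫ y, ((c^2 : ℝ) : ℂ) * Complex.exp (-2 * π * Complex.I * ((⟪a, b - b'⟫ : ℝ) : ℂ)) *
              E.indicator
                (fun z => Complex.exp (-2 * π * Complex.I * ((⟪z, b - b'⟫ : ℝ) : ℂ))) y := by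
            simp_rw [key]
        _ = ((c^2 : ℝ) : ℂ) * Complex.exp (-2 * π * Complex.I * ((⟪a, b - b'⟫ : ℝ) : ℂ)) *
              ∫ y in E, Complex.exp (-2 * π * Complex.I * ((⟪y, b - b'⟫ : ℝ) : ℂ)) := by
            rw [integral_const_mul, integral_indicator hEm]
        _ = 0 := by rw [horthE b hb b' hb' hbb, mul_zero]
    · -- distinct translates: integrand vanishes a.e.
      have : (fun x => gaborFun E (a, b) x * (starRingEnd ℂ) (gaborFun E (a', b') x))
          =ᵐ[volume] 0 := by
        filter_upwards [hdisj a ha a' ha' h1] with x hx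
        by_cases hxa : x - a ∈ E
        · have hxa' : x - a' ∉ E := fun h => hx ⟨hxa, h⟩
          simp [gaborFun, Set.indicator_of_notMem hxa']
        · simp [gaborFun, Set.indicator_of_notMem hxa]
      exact integral_eq_zero_of_ae this
  · -- norm one
    rintro ⟨a, b⟩ hp
    have key : ∀ x : EuclideanSpace ℝ (Fin d),
        ‖gaborFun E (a, b) x‖ ^ 2 = E.indicator (fun _ => c ^ 2) (x - a) := by
      intro x
      rw [gaborFun, norm_mul, mul_pow, hexp1, one_pow, mul_one]
      by_cases hx : x - a ∈ E
      · simp only [Set.indicator_of_mem hx]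
        rw [Complex.norm_real, Real.norm_eq_abs, abs_of_pos hcpos]
      · simp only [Set.indicator_of_notMem hx]
        simp
    simp_rw [key]
    rw [integral_sub_right_eq_self (E.indicator fun _ => c ^ 2) a,
      integral_indicator_const _ hEm, hc2, smul_eq_mul, measureReal_def, ← ht, mul_inv_cancel₀ htpos.ne']
  · -- completeness
    intro f hf horth
    have hLc : L.Countable := by
      rw [hL]
      have : {x : EuclideanSpace ℝ (Fin d) | ∃ c : Fin d → ℤ, x = ∑ i, (c i : ℝ) • v i}
          = Set.range (fun c : Fin d → ℤ => ∑ i, (c i : ℝ) • v i) := by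
        ext x; simp [Set.range, eq_comm]
      rw [this]
      exact Set.countable_range _
    have hae : ∀ a ∈ L, ∀ᵐ x : EuclideanSpace ℝ (Fin d) ∂volume, x - a ∈ E → f x = 0 := by
      intro a ha
      have hmp : MeasurePreserving (fun y : EuclideanSpace ℝ (Fin d) => y + a) volume volume :=
        measurePreserving_add_right volume a
      have hgL2 : MemLp (fun y : EuclideanSpace ℝ (Fin d) => f (y + a)) 2
          (volume.restrict E) := (hf.comp_measurePreserving hmp).restrict E
      have hzero : ∀ b ∈ Ldual, ∫ y in E, f (y + a) *
          Complex.exp (2 * π * Complex.I * ((⟪y, b⟫ : ℝ) : ℂ)) = 0 := by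
        intro b hb
        have h0 := horth (a, b) ⟨ha, hb⟩
        have h0' : ∫ y, f (y + a) * (starRingEnd ℂ) (gaborFun E (a, b) (y + a)) = 0 := by
          rw [integral_add_right_eq_self (fun x => f x * (starRingEnd ℂ) (gaborFun E (a, b) x)) a]
          exact h0
        have key : ∀ y : EuclideanSpace ℝ (Fin d),
            f (y + a) * (starRingEnd ℂ) (gaborFun E (a, b) (y + a))
              = ((c : ℝ) : ℂ) * Complex.exp (2 * π * Complex.I * ((⟪a, b⟫ : ℝ) : ℂ)) *
                E.indicator (fun z => f (z + a) *
                  Complex.exp (2 * π * Complex.I * ((⟪z, b⟫ : ℝ) : ℂ))) y := by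
          intro y
          simp only [gaborFun, add_sub_cancel_right]
          by_cases hy : y ∈ E
          · simp only [Set.indicator_of_mem hy]
            rw [map_mul, Complex.conj_ofReal, ← Complex.exp_conj]
            simp only [map_mul, map_neg, map_ofNat, Complex.conj_I, Complex.conj_ofReal]
            rw [show (-2 * (π:ℂ) * -Complex.I * ((⟪y + a, b⟫ : ℝ) : ℂ))
                = (2 * (π:ℂ) * Complex.I * ((⟪a, b⟫ : ℝ) : ℂ)) +
                  (2 * (π:ℂ) * Complex.I * ((⟪y, b⟫ : ℝ) : ℂ)) by
              have : ⟪y + a, b⟫ = ⟪a, b⟫ + ⟪y, b⟫ := by simp [inner_add_left]; ring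
              rw [this]; push_cast; ring]
            rw [Complex.exp_add]
            ring
          · simp only [Set.indicator_of_notMem hy]
            simp
        simp_rw [key] at h0'
        rw [integral_const_mul, integral_indicator hEm] at h0'
        rcases mul_eq_zero.mp h0' with h | h
        · rcases mul_eq_zero.mp h with h' | h'
          · exact absurd h' (by simpa using hcpos.ne')
          · exact absurd h' (Complex.exp_ne_zero _)
        · exact h
      have hres := hcompE _ hgL2 hzero
      have h1 : ∀ᵐ y : EuclideanSpace ℝ (Fin d) ∂volume, y ∈ E → f (y + a) = 0 :=
        (ae_restrict_iff' hEm).mp hres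
      have h2 := (measurePreserving_sub_right volume a).quasiMeasurePreserving.ae h1
      filter_upwards [h2] with x hx hxa
      have := hx hxa
      rwa [sub_add_cancel] at this
    have hall : ∀ᵐ x : EuclideanSpace ℝ (Fin d) ∂volume, ∀ a ∈ L, x - a ∈ E → f x = 0 :=
      (ae_ball_iff hLc).mpr hae
    filter_upwards [hall, htile] with x hx hxt
    by_contra hfx
    have hz : ∀ u : L, E.indicator (fun _ => (1:ℝ)) (x - (u : EuclideanSpace ℝ (Fin d))) = 0 := by
      intro u
      have : x - (u : EuclideanSpace ℝ (Fin d)) ∉ E := fun hm => hfx (hx u u.2 hm)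
      simp [Set.indicator_of_notMem this]
    rw [tsum_congr hz, tsum_zero] at hxt
    exact one_ne_zero hxt.symm
end
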